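/- Let $F \in \mathbb{R}[[X,Y_1,\dots,Y_n]]$ be a convergent power series (i.e., with positive radius of convergence). Then the divided-difference series $B_1,\dots,B_n \in \mathbb{R}[[X,Y,Z]]$ satisfying $F(X,Y)-F(X,Z) = \sum_i B_i(X,Y,Z)(Y_i-Z_i)$ and $B_i(X,Y,Y)=\partial F/\partial Y_i(X,Y)$ can be chosen to be convergent as well. -/

import Mathlib

open Classical in
/-- Substitution of multivariate power series (intended for series with zero constant
term, such as variables) for the variables of a multivariate power series. -/
noncomputable def mvSubst {σ τ : Type*} [Fintype σ] (a : σ → MvPowerSeries τ ℝ)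
    (F : MvPowerSeries σ ℝ) : MvPowerSeries τ ℝ :=
  fun e => ∑ d ∈ Finset.Iic (Finsupp.equivFunOnFinite.symm fun _ : σ => e.sum fun _ k => k),
    MvPowerSeries.coeff d F * MvPowerSeries.coeff e (∏ s, (a s) ^ (d s))

/-- Formal partial derivative of a multivariate power series with respect to `i`. -/
noncomputable def mvPderiv {σ : Type*} (i : σ) (F : MvPowerSeries σ ℝ) :
    MvPowerSeries σ ℝ :=
  fun d => ((d i : ℝ) + 1) * MvPowerSeries.coeff (d + Finsupp.single i 1) F

/-- A multivariate power series is convergent if it converges absolutely on some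
polydisc around the origin. -/
def MvConvergent {σ : Type*} (F : MvPowerSeries σ ℝ) : Prop :=
  ∃ r : ℝ, 0 < r ∧
    Summable fun d : σ →₀ ℕ => |MvPowerSeries.coeff d F| * r ^ (d.sum fun _ k => k)

open MvPowerSeries Finsupp Finset Function

noncomputable section Aux

/-- product of variable powers is a monomial -/
lemma aux_prod_X_pow {α τ' : Type*} [DecidableEq τ'] (t : Finset α) (g : α → τ') (d : α → ℕ) :
    (∏ s ∈ t, (MvPowerSeries.X (g s) : MvPowerSeries τ' ℝ) ^ d s)
      = MvPowerSeries.monomial (∑ s ∈ t, Finsupp.single (g s) (d s)) 1 := by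
  classical
  induction t using Finset.cons_induction with
  | empty => simp
  | cons a t ha ih =>
      rw [Finset.prod_cons, Finset.sum_cons, ih, MvPowerSeries.X_pow_eq,
        MvPowerSeries.monomial_mul_monomial, one_mul]

lemma aux_mapDomain_eq_sum {σ' τ' : Type*} [Fintype σ'] (f : σ' → τ') (d : σ' →₀ ℕ) :
    Finsupp.mapDomain f d = ∑ s : σ', Finsupp.single (f s) (d s) := by
  rw [Finsupp.mapDomain, Finsupp.sum_fintype]
  exact fun s => Finsupp.single_zero _

lemma aux_le_sum {τ' : Type*} (e : τ' →₀ ℕ) (t : τ') : e t ≤ e.sum fun _ k => k := by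
  by_cases h : t ∈ e.support
  · exact Finset.single_le_sum (fun _ _ => Nat.zero_le _) h
  · simp [Finsupp.notMem_support_iff.mp h]

lemma aux_sum_mapDomain {σ' τ' : Type*} (f : σ' → τ') (d : σ' →₀ ℕ) :
    (Finsupp.mapDomain f d).sum (fun _ k => k) = d.sum fun _ k => k :=
  Finsupp.sum_mapDomain_index (fun _ => rfl) (fun _ _ _ => rfl)

/-- the substitution of variables, coefficientwise -/
lemma aux_mvSubst_X {σ' τ' : Type*} [Fintype σ'] [DecidableEq σ'] [DecidableEq τ']
    (f : σ' → τ') (F : MvPowerSeries σ' ℝ) (e : τ' →₀ ℕ) :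
    mvSubst (fun v => MvPowerSeries.X (f v)) F e
      = ∑ d ∈ Finset.filter (fun d => Finsupp.mapDomain f d = e)
          (Finset.Iic (Finsupp.equivFunOnFinite.symm fun _ : σ' => e.sum fun _ k => k)),
          F d := by
  classical
  rw [mvSubst]
  refine Eq.trans ?_ (Finset.sum_filter _ _).symm
  refine Finset.sum_congr (by ext x; simp only [Finset.mem_Iic]) fun d _ => ?_
  rw [aux_prod_X_pow, ← aux_mapDomain_eq_sum, MvPowerSeries.coeff_monomial,
    MvPowerSeries.coeff_apply]
  by_cases h : Finsupp.mapDomain f d = e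
  · rw [if_pos h, if_pos h.symm, mul_one]
  · rw [if_neg h, if_neg (fun hh => h hh.symm), mul_zero]

lemma aux_sol_mem {σ' τ' : Type*} [Fintype σ'] [DecidableEq σ'] (f : σ' → τ') {d : σ' →₀ ℕ} {e : τ' →₀ ℕ}
    (h : Finsupp.mapDomain f d = e) :
    d ∈ Finset.Iic (Finsupp.equivFunOnFinite.symm fun _ : σ' => e.sum fun _ k => k) := by
  rw [Finset.mem_Iic, Finsupp.le_def]
  intro s
  have h1 : d s ≤ d.sum fun _ k => k := aux_le_sum d s
  have h2 : (d.sum fun _ k => k) = e.sum fun _ k => k := by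
    rw [← h, aux_sum_mapDomain]
  simpa [h2] using h1
  -- RHS value is e.sum

/-- substitution along an injective variable renaming -/
lemma aux_mvSubst_X_inj {σ' τ' : Type*} [Fintype σ'] [DecidableEq σ'] [DecidableEq τ']
    (f : σ' → τ') (hf : Function.Injective f) (F : MvPowerSeries σ' ℝ) (e : τ' →₀ ℕ)
    [Decidable (↑e.support ⊆ Set.range f)] :
    mvSubst (fun v => MvPowerSeries.X (f v)) F e
      = if h : ↑e.support ⊆ Set.range f then F (Finsupp.comapDomain f e (hf.injOn)) else 0 := by
  classical
  rw [aux_mvSubst_X]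
  split_ifs with h
  · refine Finset.sum_eq_single_of_mem (Finsupp.comapDomain f e hf.injOn)
      (Finset.mem_filter.mpr ⟨aux_sol_mem f (Finsupp.mapDomain_comapDomain f hf e h),
        Finsupp.mapDomain_comapDomain f hf e h⟩) ?_
    intro d hd hne
    exfalso
    apply hne
    have hmd := (Finset.mem_filter.mp hd).2
    have h2 : Finsupp.mapDomain f (Finsupp.comapDomain f e hf.injOn) = e :=
      Finsupp.mapDomain_comapDomain f hf e h
    exact Finsupp.mapDomain_injective hf (hmd.trans h2.symm)
  · refine Finset.sum_eq_zero ?_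
    intro d hd
    exfalso
    apply h
    have hmd := (Finset.mem_filter.mp hd).2
    rw [← hmd]
    intro t ht
    rcases Finset.mem_image.mp (Finsupp.mapDomain_support ht) with ⟨s, _, rfl⟩
    exact ⟨s, rfl⟩

end Aux

noncomputable section Main

variable {n : ℕ}

/-- `Y` variable -/
abbrev Yv (j : Fin n) : Unit ⊕ Fin n ⊕ Fin n := Sum.inr (Sum.inl j)
/-- `Z` variable -/
abbrev Zv (j : Fin n) : Unit ⊕ Fin n ⊕ Fin n := Sum.inr (Sum.inr j)

lemma Yv_ne_Yv {j k : Fin n} (h : j ≠ k) : (Yv j : Unit ⊕ Fin n ⊕ Fin n) ≠ Yv k := by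
  simp [Yv, h]
lemma Yv_ne_Zv (j k : Fin n) : (Yv j : Unit ⊕ Fin n ⊕ Fin n) ≠ Zv k := by simp [Yv, Zv]
lemma Zv_ne_Yv (j k : Fin n) : (Zv j : Unit ⊕ Fin n ⊕ Fin n) ≠ Yv k := by simp [Yv, Zv]
lemma Zv_ne_Zv {j k : Fin n} (h : j ≠ k) : (Zv j : Unit ⊕ Fin n ⊕ Fin n) ≠ Zv k := by
  simp [Zv, h]
lemma X_ne_Yv (j : Fin n) : (Sum.inl () : Unit ⊕ Fin n ⊕ Fin n) ≠ Yv j := by simp [Yv]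
lemma X_ne_Zv (j : Fin n) : (Sum.inl () : Unit ⊕ Fin n ⊕ Fin n) ≠ Zv j := by simp [Zv]

/-- the support condition for the divided difference -/
def validI (i : Fin n) (e : (Unit ⊕ Fin n ⊕ Fin n) →₀ ℕ) : Prop :=
  (∀ j, j < i → e (Yv j) = 0) ∧ (∀ j, i < j → e (Zv j) = 0)

instance (i : Fin n) (e : (Unit ⊕ Fin n ⊕ Fin n) →₀ ℕ) : Decidable (validI i e) :=
  inferInstanceAs (Decidable (_ ∧ _))

/-- exponent transfer map -/
def DD (i : Fin n) (e : (Unit ⊕ Fin n ⊕ Fin n) →₀ ℕ) : (Unit ⊕ Fin n) →₀ ℕ :=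
  Finsupp.equivFunOnFinite.symm fun s => Sum.elim (fun _ => e (Sum.inl ()))
    (fun j => if j < i then e (Zv j) else if i < j then e (Yv j)
      else e (Yv i) + e (Zv i) + 1) s

@[simp] lemma DD_inl (i : Fin n) (e) : DD i e (Sum.inl ()) = e (Sum.inl ()) := rfl

lemma DD_inr (i : Fin n) (e) (j : Fin n) :
    DD i e (Sum.inr j) = if j < i then e (Zv j) else if i < j then e (Yv j)
      else e (Yv i) + e (Zv i) + 1 := rfl

/-- the divided difference series -/
def BB (F : MvPowerSeries (Unit ⊕ Fin n) ℝ) (i : Fin n) :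
    MvPowerSeries (Unit ⊕ Fin n ⊕ Fin n) ℝ :=
  fun e => if validI i e then F (DD i e) else 0


lemma aux_mapDomain_apply_sum {σ' τ' : Type*} [Fintype σ'] [DecidableEq τ']
    (f : σ' → τ') (d : σ' →₀ ℕ) (t : τ') :
    (Finsupp.mapDomain f d) t = ∑ s : σ', if f s = t then d s else 0 := by
  classical
  rw [aux_mapDomain_eq_sum]
  rw [Finset.sum_apply']
  simp [Finsupp.single_apply]

lemma mapDomain_f3_inl (d : (Unit ⊕ Fin n ⊕ Fin n) →₀ ℕ) :
    (Finsupp.mapDomain (Sum.map id (Sum.elim id id) : Unit ⊕ Fin n ⊕ Fin n → Unit ⊕ Fin n) d)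
      (Sum.inl ()) = d (Sum.inl ()) := by
  rw [aux_mapDomain_apply_sum]
  simp [Fintype.sum_sum_type, Sum.map]

lemma mapDomain_f3_inr (d : (Unit ⊕ Fin n ⊕ Fin n) →₀ ℕ) (j : Fin n) :
    (Finsupp.mapDomain (Sum.map id (Sum.elim id id) : Unit ⊕ Fin n ⊕ Fin n → Unit ⊕ Fin n) d)
      (Sum.inr j) = d (Yv j) + d (Zv j) := by
  rw [aux_mapDomain_apply_sum]
  simp [Fintype.sum_sum_type, Sum.map, Finset.sum_ite_eq']
  rw [Finset.sum_eq_single j (by intro b _ hb; simp [hb]) (by simp),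
    Finset.sum_eq_single j (by intro b _ hb; simp [hb]) (by simp)]
  simp

/-- the exponents contributing to the substitution `Y = Z` in `BB F i` -/
def solSet (i : Fin n) (e : (Unit ⊕ Fin n) →₀ ℕ) :
    Finset ((Unit ⊕ Fin n ⊕ Fin n) →₀ ℕ) :=
  (Finset.Iic (Finsupp.equivFunOnFinite.symm
      fun _ : Unit ⊕ Fin n ⊕ Fin n => e.sum fun _ k => k)).filter
    (fun d => Finsupp.mapDomain (Sum.map id (Sum.elim id id)) d = e ∧ validI i d)

/-- the parametrization of `solSet` -/
def dk (i : Fin n) (e : (Unit ⊕ Fin n) →₀ ℕ) (k : ℕ) : (Unit ⊕ Fin n ⊕ Fin n) →₀ ℕ :=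
  Finsupp.equivFunOnFinite.symm fun t => Sum.elim (fun _ => e (Sum.inl ()))
    (Sum.elim
      (fun j => if j < i then 0 else if i < j then e (Sum.inr j) else k)
      (fun j => if j < i then e (Sum.inr j) else if i < j then 0 else e (Sum.inr i) - k)) t

lemma dk_apply (i : Fin n) (e : (Unit ⊕ Fin n) →₀ ℕ) (k : ℕ) (t) :
    dk i e k t = Sum.elim (fun _ => e (Sum.inl ()))
    (Sum.elim
      (fun j => if j < i then 0 else if i < j then e (Sum.inr j) else k)
      (fun j => if j < i then e (Sum.inr j) else if i < j then 0 else e (Sum.inr i) - k)) t :=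
  rfl

lemma mem_solSet_iff (i : Fin n) (e : (Unit ⊕ Fin n) →₀ ℕ) (d) :
    d ∈ solSet i e ↔
      Finsupp.mapDomain (Sum.map id (Sum.elim id id)) d = e ∧ validI i d := by
  constructor
  · exact fun h => (Finset.mem_filter.mp h).2
  · intro h
    exact Finset.mem_filter.mpr ⟨aux_sol_mem _ h.1, h⟩

lemma solSet_eq_image (i : Fin n) (e : (Unit ⊕ Fin n) →₀ ℕ) :
    solSet i e = (Finset.range (e (Sum.inr i) + 1)).image (dk i e) := by
  ext d
  rw [mem_solSet_iff]
  constructor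
  · rintro ⟨hmap, hval⟩
    rw [Finset.mem_image]
    refine ⟨d (Yv i), ?_, ?_⟩
    · rw [Finset.mem_range]
      have := mapDomain_f3_inr d i
      rw [hmap] at this
      omega
    · refine (?_ : d = dk i e (d (Yv i))).symm
      ext t
      rw [dk_apply]
      rcases t with _ | j | j
      · have h0 := mapDomain_f3_inl d
        rw [hmap] at h0
        exact h0.symm
      · simp only [Sum.elim_inr, Sum.elim_inl]
        have h0 := mapDomain_f3_inr d j
        rw [hmap] at h0
        rcases lt_trichotomy j i with hj | hj | hj
        · rw [if_pos hj]
          exact hval.1 j hj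
        · subst hj
          rw [if_neg (lt_irrefl _), if_neg (lt_irrefl _)]
        · rw [if_neg (not_lt.mpr hj.le), if_pos hj]
          have hz := hval.2 j hj
          simp only [Yv, Zv] at h0 hz ⊢
          omega
      · simp only [Sum.elim_inr]
        have h0 := mapDomain_f3_inr d j
        rw [hmap] at h0
        rcases lt_trichotomy j i with hj | hj | hj
        · rw [if_pos hj]
          have hy := hval.1 j hj
          simp only [Yv, Zv] at h0 hy ⊢
          omega
        · subst hj
          rw [if_neg (lt_irrefl _), if_neg (lt_irrefl _)]
          simp only [Yv, Zv] at h0 ⊢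
          omega
        · rw [if_neg (not_lt.mpr hj.le), if_pos hj]
          exact hval.2 j hj
  · intro hd
    rw [Finset.mem_image] at hd
    obtain ⟨k, hk, rfl⟩ := hd
    rw [Finset.mem_range] at hk
    constructor
    · ext t
      rcases t with _ | j
      · rw [mapDomain_f3_inl]
        rfl
      · rw [mapDomain_f3_inr]
        show (if j < i then 0 else if i < j then e (Sum.inr j) else k)
          + (if j < i then e (Sum.inr j) else if i < j then 0 else e (Sum.inr i) - k)
          = e (Sum.inr j)
        rcases lt_trichotomy j i with hj | hj | hj
        · rw [if_pos hj, if_pos hj]; omega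
        · subst hj
          rw [if_neg (lt_irrefl _), if_neg (lt_irrefl _), if_neg (lt_irrefl _),
            if_neg (lt_irrefl _)]
          omega
        · rw [if_neg (not_lt.mpr hj.le), if_neg (not_lt.mpr hj.le), if_pos hj, if_pos hj]
          omega
    · constructor
      · intro j hj
        show (if j < i then 0 else if i < j then e (Sum.inr j) else k) = 0
        rw [if_pos hj]
      · intro j hj
        show (if j < i then e (Sum.inr j) else if i < j then 0 else e (Sum.inr i) - k) = 0
        rw [if_neg (not_lt.mpr hj.le), if_pos hj]

lemma dk_injOn (i : Fin n) (e : (Unit ⊕ Fin n) →₀ ℕ) :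
    Set.InjOn (dk i e) (Finset.range (e (Sum.inr i) + 1)) := by
  intro k hk l hl hkl
  have := DFunLike.congr_fun hkl (Yv i)
  rw [dk_apply, dk_apply] at this
  simpa using this

lemma DD_of_mem_solSet {i : Fin n} {e : (Unit ⊕ Fin n) →₀ ℕ} {d}
    (hd : d ∈ solSet i e) : DD i d = e + Finsupp.single (Sum.inr i) 1 := by
  rw [mem_solSet_iff] at hd
  obtain ⟨hmap, hval⟩ := hd
  ext t
  rcases t with _ | j
  · rw [Finsupp.add_apply, Finsupp.single_apply, if_neg (by simp)]
    have h0 := mapDomain_f3_inl d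
    rw [hmap] at h0
    exact h0.symm
  · rw [Finsupp.add_apply, Finsupp.single_apply, DD_inr]
    have := mapDomain_f3_inr d j
    rw [hmap] at this
    rcases lt_trichotomy j i with hj | hj | hj
    · rw [if_pos hj, if_neg (by simp [hj.ne'])]
      have := hval.1 j hj
      omega
    · subst hj
      rw [if_neg (lt_irrefl _), if_neg (lt_irrefl _), if_pos rfl]
      omega
    · rw [if_neg (not_lt.mpr hj.le), if_pos hj, if_neg (by simp [hj.ne])]
      have := hval.2 j hj
      omega

lemma part3 (F : MvPowerSeries (Unit ⊕ Fin n) ℝ) (i : Fin n) :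
    mvSubst (fun v => MvPowerSeries.X (Sum.map id (Sum.elim id id) v)) (BB F i)
      = mvPderiv (Sum.inr i) F := by
  funext e
  rw [aux_mvSubst_X]
  have hsplit : ∑ d ∈ Finset.filter
      (fun d => Finsupp.mapDomain (Sum.map id (Sum.elim id id)) d = e)
      (Finset.Iic (Finsupp.equivFunOnFinite.symm
        fun _ : Unit ⊕ Fin n ⊕ Fin n => e.sum fun _ k => k)), BB F i d
      = ∑ d ∈ solSet i e, F (DD i d) := by
    simp only [BB]
    rw [← Finset.sum_filter, solSet, Finset.filter_filter]
  rw [hsplit]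
  have hconst : ∑ d ∈ solSet i e, F (DD i d)
      = (solSet i e).card • F (e + Finsupp.single (Sum.inr i) 1) := by
    rw [← Finset.sum_const]
    exact Finset.sum_congr rfl fun d hd => by rw [DD_of_mem_solSet hd]
  rw [hconst, solSet_eq_image, Finset.card_image_of_injOn (dk_injOn i e),
    Finset.card_range]
  rw [mvPderiv, nsmul_eq_mul, MvPowerSeries.coeff_apply]
  push_cast
  ring

/-! ### Part 2: the telescoping identity -/

/-- intermediate exponents -/
def cFun (e : (Unit ⊕ Fin n ⊕ Fin n) →₀ ℕ) (m : ℕ) : (Unit ⊕ Fin n) →₀ ℕ :=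
  Finsupp.equivFunOnFinite.symm fun s => Sum.elim (fun _ => e (Sum.inl ()))
    (fun (j : Fin n) => if (j : ℕ) < m then e (Zv j) else e (Yv j)) s

@[simp] lemma cFun_inl (e : (Unit ⊕ Fin n ⊕ Fin n) →₀ ℕ) (m : ℕ) : cFun e m (Sum.inl ()) = e (Sum.inl ()) := rfl
lemma cFun_inr (e : (Unit ⊕ Fin n ⊕ Fin n) →₀ ℕ) (m : ℕ) (j : Fin n) :
    cFun e m (Sum.inr j) = if (j : ℕ) < m then e (Zv j) else e (Yv j) := rfl

/-- intermediate terms of the telescoping sum -/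
def hFun (F : MvPowerSeries (Unit ⊕ Fin n) ℝ) (e : (Unit ⊕ Fin n ⊕ Fin n) →₀ ℕ)
    (m : ℕ) : ℝ :=
  if (∀ j : Fin n, (j : ℕ) < m → e (Yv j) = 0) ∧ (∀ j : Fin n, m ≤ (j : ℕ) → e (Zv j) = 0)
    then F (cFun e m) else 0

/-- the common value -/
def wFun (e : (Unit ⊕ Fin n ⊕ Fin n) →₀ ℕ) (i : Fin n) : (Unit ⊕ Fin n) →₀ ℕ :=
  Finsupp.equivFunOnFinite.symm fun s => Sum.elim (fun _ => e (Sum.inl ()))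
    (fun j => if j < i then e (Zv j) else if i < j then e (Yv j)
      else e (Yv i) + e (Zv i)) s

@[simp] lemma wFun_inl (e : (Unit ⊕ Fin n ⊕ Fin n) →₀ ℕ) (i : Fin n) : wFun e i (Sum.inl ()) = e (Sum.inl ()) := rfl
lemma wFun_inr (e : (Unit ⊕ Fin n ⊕ Fin n) →₀ ℕ) (i : Fin n) (j : Fin n) :
    wFun e i (Sum.inr j) = if j < i then e (Zv j) else if i < j then e (Yv j)
      else e (Yv i) + e (Zv i) := rfl

lemma sub_single_apply_ne (e : (Unit ⊕ Fin n ⊕ Fin n) →₀ ℕ) (t t' : Unit ⊕ Fin n ⊕ Fin n)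
    (h : t ≠ t') (k : ℕ) : (e - Finsupp.single t k) t' = e t' := by
  rw [Finsupp.tsub_apply, Finsupp.single_apply, if_neg h, Nat.sub_zero]

lemma sub_single_apply_self (e : (Unit ⊕ Fin n ⊕ Fin n) →₀ ℕ) (t : Unit ⊕ Fin n ⊕ Fin n)
    (k : ℕ) : (e - Finsupp.single t k) t = e t - k := by
  rw [Finsupp.tsub_apply, Finsupp.single_apply, if_pos rfl]

lemma validI_sub (i : Fin n) (e : (Unit ⊕ Fin n ⊕ Fin n) →₀ ℕ) (t : Unit ⊕ Fin n ⊕ Fin n)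
    (ht : t = Yv i ∨ t = Zv i) :
    validI i (e - Finsupp.single t 1) ↔ validI i e := by
  have hY : ∀ j : Fin n, j < i → t ≠ Yv j := by
    rintro j hj (rfl | rfl) <;> simp_all [Yv, Zv] <;> omega
  have hZ : ∀ j : Fin n, i < j → t ≠ Zv j := by
    rintro j hj (rfl | rfl) <;> simp_all [Yv, Zv] <;> omega
  unfold validI
  constructor
  · rintro ⟨h1, h2⟩
    exact ⟨fun j hj => by rw [← sub_single_apply_ne e t (Yv j) (hY j hj) 1]; exact h1 j hj,
      fun j hj => by rw [← sub_single_apply_ne e t (Zv j) (hZ j hj) 1]; exact h2 j hj⟩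
  · rintro ⟨h1, h2⟩
    exact ⟨fun j hj => by rw [sub_single_apply_ne e t (Yv j) (hY j hj) 1]; exact h1 j hj,
      fun j hj => by rw [sub_single_apply_ne e t (Zv j) (hZ j hj) 1]; exact h2 j hj⟩

lemma DD_sub_Y (i : Fin n) (e : (Unit ⊕ Fin n ⊕ Fin n) →₀ ℕ) (hai : 1 ≤ e (Yv i)) :
    DD i (e - Finsupp.single (Yv i) 1) = wFun e i := by
  ext t
  rcases t with _ | j
  · rw [DD_inl, wFun_inl, sub_single_apply_ne _ _ _ (Ne.symm (X_ne_Yv i)) 1]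
  · rw [DD_inr, wFun_inr]
    rcases lt_trichotomy j i with hj | hj | hj
    · rw [if_pos hj, if_pos hj, sub_single_apply_ne _ _ _ (Yv_ne_Zv i j) 1]
    · subst hj
      rw [if_neg (lt_irrefl _), if_neg (lt_irrefl _), if_neg (lt_irrefl _),
        if_neg (lt_irrefl _), sub_single_apply_self,
        sub_single_apply_ne _ _ _ (Yv_ne_Zv j j) 1]
      omega
    · rw [if_neg (not_lt.mpr hj.le), if_pos hj, if_neg (not_lt.mpr hj.le), if_pos hj,
        sub_single_apply_ne _ _ _ (Yv_ne_Yv hj.ne) 1]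

lemma DD_sub_Z (i : Fin n) (e : (Unit ⊕ Fin n ⊕ Fin n) →₀ ℕ) (hbi : 1 ≤ e (Zv i)) :
    DD i (e - Finsupp.single (Zv i) 1) = wFun e i := by
  ext t
  rcases t with _ | j
  · rw [DD_inl, wFun_inl, sub_single_apply_ne _ _ _ (Ne.symm (X_ne_Zv i)) 1]
  · rw [DD_inr, wFun_inr]
    rcases lt_trichotomy j i with hj | hj | hj
    · rw [if_pos hj, if_pos hj, sub_single_apply_ne _ _ _ (Zv_ne_Zv hj.ne') 1]
    · subst hj
      rw [if_neg (lt_irrefl _), if_neg (lt_irrefl _), if_neg (lt_irrefl _),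
        if_neg (lt_irrefl _), sub_single_apply_ne _ _ _ (Zv_ne_Yv j j) 1,
        sub_single_apply_self]
      omega
    · rw [if_neg (not_lt.mpr hj.le), if_pos hj, if_neg (not_lt.mpr hj.le), if_pos hj,
        sub_single_apply_ne _ _ _ (Zv_ne_Yv i j) 1]

lemma wFun_eq_cFun_left (i : Fin n) (e : (Unit ⊕ Fin n ⊕ Fin n) →₀ ℕ) (hbi : e (Zv i) = 0) : wFun e i = cFun e i := by
  ext t
  rcases t with _ | j
  · rfl
  · rw [wFun_inr, cFun_inr]
    rcases lt_trichotomy j i with hj | hj | hj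
    · rw [if_pos hj, if_pos (Fin.lt_def.mp hj)]
    · subst hj
      rw [if_neg (lt_irrefl _), if_neg (lt_irrefl _), if_neg (lt_irrefl _), hbi]
      omega
    · rw [if_neg (not_lt.mpr hj.le), if_pos hj,
        if_neg (by have := Fin.lt_def.mp hj; omega)]

lemma wFun_eq_cFun_right (i : Fin n) (e : (Unit ⊕ Fin n ⊕ Fin n) →₀ ℕ) (hai : e (Yv i) = 0) :
    wFun e i = cFun e ((i : ℕ) + 1) := by
  ext t
  rcases t with _ | j
  · rfl
  · rw [wFun_inr, cFun_inr]
    rcases lt_trichotomy j i with hj | hj | hj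
    · rw [if_pos hj, if_pos (by have := Fin.lt_def.mp hj; omega)]
    · subst hj
      rw [if_neg (lt_irrefl _), if_neg (lt_irrefl _), if_pos (by omega), hai]
      omega
    · rw [if_neg (not_lt.mpr hj.le), if_pos hj, if_neg (by have := Fin.lt_def.mp hj; omega)]

lemma term_eq (F : MvPowerSeries (Unit ⊕ Fin n) ℝ) (e : (Unit ⊕ Fin n ⊕ Fin n) →₀ ℕ) (i : Fin n) :
    MvPowerSeries.coeff e (BB F i *
        (MvPowerSeries.X (Yv i) - MvPowerSeries.X (Zv i)))
      = hFun F e i - hFun F e ((i : ℕ) + 1) := by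
  classical
  rw [mul_sub, map_sub, MvPowerSeries.X_def, MvPowerSeries.X_def,
    MvPowerSeries.coeff_mul_monomial, MvPowerSeries.coeff_mul_monomial]
  simp only [mul_one, Finsupp.single_le_iff, MvPowerSeries.coeff_apply]
  by_cases hv : validI i e
  · have hBY : 1 ≤ e (Yv i) →
        BB F i (e - Finsupp.single (Yv i) 1) = F (wFun e i) := by
      intro hai
      rw [BB, if_pos ((validI_sub i e _ (Or.inl rfl)).mpr hv), DD_sub_Y i e hai]
    have hBZ : 1 ≤ e (Zv i) →
        BB F i (e - Finsupp.single (Zv i) 1) = F (wFun e i) := by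
      intro hbi
      rw [BB, if_pos ((validI_sub i e _ (Or.inr rfl)).mpr hv), DD_sub_Z i e hbi]
    have hc1 : e (Zv i) = 0 → ((∀ j : Fin n, (j : ℕ) < (i : ℕ) → e (Yv j) = 0) ∧
        (∀ j : Fin n, (i : ℕ) ≤ (j : ℕ) → e (Zv j) = 0)) := by
      intro hbi
      refine ⟨fun j hj => hv.1 j (Fin.lt_def.mpr hj), fun j hj => ?_⟩
      rcases eq_or_lt_of_le hj with hj' | hj'
      · rwa [show j = i from Fin.ext hj'.symm]
      · exact hv.2 j (Fin.lt_def.mpr hj')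
    have hc1' : e (Zv i) ≠ 0 → ¬ ((∀ j : Fin n, (j : ℕ) < (i : ℕ) → e (Yv j) = 0) ∧
        (∀ j : Fin n, (i : ℕ) ≤ (j : ℕ) → e (Zv j) = 0)) :=
      fun hbi h => hbi (h.2 i (le_refl _))
    have hc2 : e (Yv i) = 0 → ((∀ j : Fin n, (j : ℕ) < (i : ℕ) + 1 → e (Yv j) = 0) ∧
        (∀ j : Fin n, (i : ℕ) + 1 ≤ (j : ℕ) → e (Zv j) = 0)) := by
      intro hai
      refine ⟨fun j hj => ?_, fun j hj => hv.2 j (Fin.lt_def.mpr (by omega))⟩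
      rcases Nat.lt_succ_iff_lt_or_eq.mp hj with hj' | hj'
      · exact hv.1 j (Fin.lt_def.mpr hj')
      · rwa [show j = i from Fin.ext hj']
    have hc2' : e (Yv i) ≠ 0 → ¬ ((∀ j : Fin n, (j : ℕ) < (i : ℕ) + 1 → e (Yv j) = 0) ∧
        (∀ j : Fin n, (i : ℕ) + 1 ≤ (j : ℕ) → e (Zv j) = 0)) :=
      fun hai h => hai (h.1 i (by omega))
    by_cases hai : e (Yv i) = 0 <;> by_cases hbi : e (Zv i) = 0
    · rw [if_neg (by omega), if_neg (by omega), hFun, hFun,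
        if_pos (hc1 hbi), if_pos (hc2 hai)]
      have hcc : cFun e (i : ℕ) = cFun e ((i : ℕ) + 1) := by
        ext t
        rcases t with _ | j
        · rfl
        · rw [cFun_inr, cFun_inr]
          rcases lt_trichotomy ((j : ℕ)) ((i : ℕ)) with hj | hj | hj
          · rw [if_pos hj, if_pos (by omega)]
          · have hji : j = i := Fin.ext hj
            subst hji
            rw [if_neg (by omega), if_pos (by omega), hai, hbi]
          · rw [if_neg (by omega), if_neg (by omega)]
      rw [hcc]
      ring
    · rw [if_neg (by omega), if_pos (by omega), hBZ (by omega), hFun, hFun,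
        if_neg (hc1' hbi), if_pos (hc2 hai), wFun_eq_cFun_right i e hai]
    · rw [if_pos (by omega), if_neg (by omega), hBY (by omega), hFun, hFun,
        if_pos (hc1 hbi), if_neg (hc2' hai), wFun_eq_cFun_left i e hbi]
    · rw [if_pos (by omega), if_pos (by omega), hBY (by omega), hBZ (by omega),
        hFun, hFun, if_neg (hc1' hbi), if_neg (hc2' hai)]
      ring
  · have hB0 : ∀ t, (t = Yv i ∨ t = Zv i) → BB F i (e - Finsupp.single t 1) = 0 := by
      intro t ht
      rw [BB, if_neg (fun hvv => hv ((validI_sub i e t ht).mp hvv))]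
    have h1 : hFun F e i = 0 := by
      rw [hFun, if_neg]
      rintro ⟨ha, hb⟩
      exact hv ⟨fun j hj => ha j (Fin.lt_def.mp hj),
        fun j hj => hb j (le_of_lt (Fin.lt_def.mp hj))⟩
    have h2 : hFun F e ((i : ℕ) + 1) = 0 := by
      rw [hFun, if_neg]
      rintro ⟨ha, hb⟩
      exact hv ⟨fun j hj => ha j (by have := Fin.lt_def.mp hj; omega),
        fun j hj => hb j (by have := Fin.lt_def.mp hj; omega)⟩
    rw [h1, h2]
    have e1 := hB0 _ (Or.inl rfl)
    have e2 := hB0 _ (Or.inr rfl)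
    split_ifs <;> simp [e1, e2]

lemma lhs1 (F : MvPowerSeries (Unit ⊕ Fin n) ℝ) (e : (Unit ⊕ Fin n ⊕ Fin n) →₀ ℕ) :
    mvSubst (fun v => MvPowerSeries.X (Sum.map id Sum.inl v)) F e = hFun F e 0 := by
  classical
  have hinj : Function.Injective (Sum.map id Sum.inl : Unit ⊕ Fin n → Unit ⊕ Fin n ⊕ Fin n) :=
    Function.Injective.sumMap Function.injective_id Sum.inl_injective
  rw [aux_mvSubst_X_inj _ hinj]
  rw [hFun]
  by_cases h : (e.support : Set (Unit ⊕ Fin n ⊕ Fin n)) ⊆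
      Set.range (Sum.map id Sum.inl : Unit ⊕ Fin n → Unit ⊕ Fin n ⊕ Fin n)
  · rw [dif_pos h, if_pos]
    · congr 1
      ext t
      rcases t with _ | j
      · rw [Finsupp.comapDomain_apply]; rfl
      · rw [Finsupp.comapDomain_apply, cFun_inr, if_neg (by omega)]; rfl
    · refine ⟨fun j hj => absurd hj (by omega), fun j _ => ?_⟩
      by_contra hz
      obtain ⟨s, hs⟩ := h (Finsupp.mem_support_iff.mpr hz)
      rcases s with _ | j' <;> simp [Zv, Sum.map] at hs
  · rw [dif_neg h, if_neg]
    rintro ⟨-, hb⟩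
    apply h
    intro t ht
    rcases t with _ | j | j
    · exact ⟨Sum.inl (), rfl⟩
    · exact ⟨Sum.inr j, rfl⟩
    · exact absurd (hb j (by omega)) (Finsupp.mem_support_iff.mp ht)

lemma lhs2 (F : MvPowerSeries (Unit ⊕ Fin n) ℝ) (e : (Unit ⊕ Fin n ⊕ Fin n) →₀ ℕ) :
    mvSubst (fun v => MvPowerSeries.X
      (Sum.map id (Sum.inr : Fin n → Fin n ⊕ Fin n) v)) F e = hFun F e n := by
  classical
  have hinj : Function.Injective
      (Sum.map id (Sum.inr : Fin n → Fin n ⊕ Fin n) : Unit ⊕ Fin n → Unit ⊕ Fin n ⊕ Fin n) :=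
    Function.Injective.sumMap Function.injective_id Sum.inr_injective
  rw [aux_mvSubst_X_inj _ hinj]
  rw [hFun]
  by_cases h : (e.support : Set (Unit ⊕ Fin n ⊕ Fin n)) ⊆ Set.range
      (Sum.map id (Sum.inr : Fin n → Fin n ⊕ Fin n) : Unit ⊕ Fin n → Unit ⊕ Fin n ⊕ Fin n)
  · rw [dif_pos h, if_pos]
    · congr 1
      ext t
      rcases t with _ | j
      · rw [Finsupp.comapDomain_apply]; rfl
      · rw [Finsupp.comapDomain_apply, cFun_inr, if_pos (by omega)]; rfl
    · refine ⟨fun j _ => ?_, fun j hj => absurd hj (by omega)⟩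
      by_contra hy
      obtain ⟨s, hs⟩ := h (Finsupp.mem_support_iff.mpr hy)
      rcases s with _ | j' <;> simp [Yv, Sum.map] at hs
  · rw [dif_neg h, if_neg]
    rintro ⟨ha, -⟩
    apply h
    intro t ht
    rcases t with _ | j | j
    · exact ⟨Sum.inl (), rfl⟩
    · exact absurd (ha j (by omega)) (Finsupp.mem_support_iff.mp ht)
    · exact ⟨Sum.inr j, rfl⟩

lemma part2 (F : MvPowerSeries (Unit ⊕ Fin n) ℝ) :
    mvSubst (fun v => MvPowerSeries.X (Sum.map id Sum.inl v)) F
        - mvSubst (fun v => MvPowerSeries.X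
            (Sum.map id (Sum.inr : Fin n → Fin n ⊕ Fin n) v)) F
      = ∑ i, BB F i * (MvPowerSeries.X (Sum.inr (Sum.inl i))
          - MvPowerSeries.X (Sum.inr (Sum.inr i))) := by
  apply MvPowerSeries.ext
  intro e
  rw [map_sub, map_sum]
  rw [MvPowerSeries.coeff_apply, MvPowerSeries.coeff_apply, lhs1, lhs2]
  have : ∀ i : Fin n, MvPowerSeries.coeff e (BB F i *
      (MvPowerSeries.X (Sum.inr (Sum.inl i)) - MvPowerSeries.X (Sum.inr (Sum.inr i))))
      = hFun F e i - hFun F e ((i : ℕ) + 1) := fun i => term_eq F e i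
  rw [Finset.sum_congr rfl fun i _ => this i]
  rw [Fin.sum_univ_eq_sum_range (fun m => hFun F e m - hFun F e (m + 1)) n,
    Finset.sum_range_sub' (fun m => hFun F e m) n]

/-! ### Part 1: convergence -/

lemma DD_sum (i : Fin n) (e : (Unit ⊕ Fin n ⊕ Fin n) →₀ ℕ) (hv : validI i e) :
    (DD i e).sum (fun _ k => k) = (e.sum fun _ k => k) + 1 := by
  rw [Finsupp.sum_fintype _ _ (fun _ => rfl), Finsupp.sum_fintype _ _ (fun _ => rfl)]
  rw [Fintype.sum_sum_type, Fintype.sum_sum_type,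
    Fintype.sum_sum_type (fun w : Fin n ⊕ Fin n => e (Sum.inr w))]
  simp only [Finset.univ_unique, Finset.sum_singleton, DD_inl, DD_inr]
  have hterm : ∀ j : Fin n,
      (if j < i then e (Zv j) else if i < j then e (Yv j) else e (Yv i) + e (Zv i) + 1)
      = e (Yv j) + e (Zv j) + (if j = i then 1 else 0) := by
    intro j
    rcases lt_trichotomy j i with hj | hj | hj
    · rw [if_pos hj, if_neg hj.ne]
      have := hv.1 j hj
      simp only [Yv, Zv] at this ⊢
      omega
    · subst hj
      simp
    · rw [if_neg (not_lt.mpr hj.le), if_pos hj, if_neg hj.ne']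
      have := hv.2 j hj
      simp only [Yv, Zv] at this ⊢
      omega
  rw [Finset.sum_congr rfl fun j _ => hterm j, Finset.sum_add_distrib,
    Finset.sum_add_distrib, Finset.sum_ite_eq' Finset.univ i (fun _ => 1)]
  simp only [Finset.mem_univ, if_true, Yv, Zv]
  have hX : (DD i e) (Sum.inl default) = e (Sum.inl default) := rfl
  omega

lemma part1 (F : MvPowerSeries (Unit ⊕ Fin n) ℝ) (hF : MvConvergent F) (i : Fin n) :
    MvConvergent (BB F i) := by
  classical
  obtain ⟨r, hr, hsum⟩ := hF
  refine ⟨min r 1 / 2, by positivity, ?_⟩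
  set G : ((Unit ⊕ Fin n) →₀ ℕ) × ℕ → ℝ := fun p =>
    (|MvPowerSeries.coeff p.1 F| * r ^ (p.1.sum fun _ k => k)) * ((1 / r) * (1 / 2) ^ p.2)
    with hGdef
  have hgeo : Summable (fun k : ℕ => (1 / r) * (1 / 2 : ℝ) ^ k) :=
    (summable_geometric_of_lt_one (by norm_num) (by norm_num)).mul_left _
  have hG : Summable G :=
    hsum.mul_of_nonneg hgeo (Pi.le_def.mpr fun d => by positivity)
      (Pi.le_def.mpr fun k => by positivity)
  set V : Set ((Unit ⊕ Fin n ⊕ Fin n) →₀ ℕ) := {e | validI i e} with hVdef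
  set emb : ((Unit ⊕ Fin n ⊕ Fin n) →₀ ℕ) → ((Unit ⊕ Fin n) →₀ ℕ) × ℕ :=
    fun e => (DD i e, e (Zv i)) with hembdef
  have hinj : Function.Injective fun v : V => emb (v : (Unit ⊕ Fin n ⊕ Fin n) →₀ ℕ) := by
    rintro ⟨e1, h1⟩ ⟨e2, h2⟩ h
    simp only [hembdef, Prod.mk.injEq] at h
    obtain ⟨hDD, hZ⟩ := h
    have h1' : validI i e1 := h1
    have h2' : validI i e2 := h2
    refine Subtype.ext ?_
    ext t
    rcases t with _ | j | j
    · exact (DD_inl i e1) ▸ (DD_inl i e2) ▸ DFunLike.congr_fun hDD (Sum.inl ())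
    · have hD := DFunLike.congr_fun hDD (Sum.inr j)
      rw [DD_inr, DD_inr] at hD
      rcases lt_trichotomy j i with hj | hj | hj
      · rw [h1'.1 j hj, h2'.1 j hj]
      · subst hj
        rw [if_neg (lt_irrefl _), if_neg (lt_irrefl _), if_neg (lt_irrefl _),
          if_neg (lt_irrefl _)] at hD
        simp only [Yv, Zv] at hD hZ ⊢
        omega
      · rw [if_neg (not_lt.mpr hj.le), if_pos hj, if_neg (not_lt.mpr hj.le),
          if_pos hj] at hD
        exact hD
    · have hD := DFunLike.congr_fun hDD (Sum.inr j)
      rw [DD_inr, DD_inr] at hD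
      rcases lt_trichotomy j i with hj | hj | hj
      · rw [if_pos hj, if_pos hj] at hD
        exact hD
      · subst hj
        exact hZ
      · rw [h1'.2 j hj, h2'.2 j hj]
  have hGind : Summable (V.indicator (fun e => G (emb e))) := by
    rw [← summable_subtype_iff_indicator]
    exact hG.comp_injective hinj
  refine Summable.of_nonneg_of_le (fun e => by positivity) (fun e => ?_) hGind
  by_cases hv : validI i e
  · rw [Set.indicator_of_mem (show e ∈ V from hv)]
    rw [MvPowerSeries.coeff_apply, BB, if_pos hv]
    have hDsum : (DD i e).sum (fun _ k => k) = (e.sum fun _ k => k) + 1 := DD_sum i e hv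
    simp only [hGdef, hembdef, hDsum]
    set m := e.sum fun _ k => k with hm
    have hk : e (Zv i) ≤ m := aux_le_sum e (Zv i)
    have hr' : r ^ (m + 1) * ((1 / r) * (1 / 2 : ℝ) ^ e (Zv i))
        = r ^ m * (1 / 2 : ℝ) ^ e (Zv i) := by
      rw [pow_succ]
      field_simp
    have hsle : (min r 1 / 2) ^ m ≤ r ^ m * (1 / 2 : ℝ) ^ e (Zv i) := by
      have h1 : (min r 1 / 2 : ℝ) ^ m = (min r 1) ^ m * (1 / 2) ^ m := by
        rw [div_eq_mul_one_div, mul_pow]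
      rw [h1]
      refine mul_le_mul (pow_le_pow_left₀ (by positivity) (min_le_left _ _) m)
        (pow_le_pow_of_le_one (by norm_num) (by norm_num) hk) (by positivity)
        (by positivity)
    calc |F (DD i e)| * (min r 1 / 2) ^ m
        ≤ |F (DD i e)| * (r ^ m * (1 / 2 : ℝ) ^ e (Zv i)) :=
          mul_le_mul_of_nonneg_left hsle (abs_nonneg _)
      _ = |MvPowerSeries.coeff (DD i e) F| * r ^ (m + 1) * ((1 / r) * (1 / 2) ^ e (Zv i)) := by
          rw [MvPowerSeries.coeff_apply, mul_assoc, hr']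
      _ = _ := by rw [mul_assoc]
  · rw [Set.indicator_of_notMem (show e ∉ V from hv), MvPowerSeries.coeff_apply, BB, if_neg hv]
    simp

theorem stmt1 (n : ℕ) (F : MvPowerSeries (Unit ⊕ Fin n) ℝ) (hF : MvConvergent F) :
    ∃ B : Fin n → MvPowerSeries (Unit ⊕ Fin n ⊕ Fin n) ℝ,
      (∀ i, MvConvergent (B i)) ∧
      (mvSubst (fun v => MvPowerSeries.X (Sum.map id Sum.inl v)) F
        - mvSubst (fun v => MvPowerSeries.X (Sum.map id (Sum.inr : Fin n → Fin n ⊕ Fin n) v)) F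
        = ∑ i, B i * (MvPowerSeries.X (Sum.inr (Sum.inl i))
            - MvPowerSeries.X (Sum.inr (Sum.inr i)))) ∧
      ∀ i, mvSubst (fun v => MvPowerSeries.X (Sum.map id (Sum.elim id id) v)) (B i)
            = mvPderiv (Sum.inr i) F := by
  exact ⟨BB F, fun i => part1 F hF i, part2 F, fun i => part3 F i⟩
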